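/- For every t ≥ 2, the reduced degree distribution satisfies the recursion P̄(0,t+1) = ((t-1)/t) · P̄(0,t) · (1 - A/((m+A)·t))^m + 1/t. -/

import Mathlib

open Finset Filter Topology

/-- recursion for the reduced degree distribution at degree 0. -/
theorem dms_reduced_recursion_deg_zero
    (m : ℕ) (hm : 1 ≤ m) (A : ℝ) (hA : 0 < A)
    (P : ℕ → ℕ → ℕ → ℝ)
    (hP11 : ∀ q : ℕ, P q 1 1 = if q = m then 1 else 0)
    (hPii : ∀ q i : ℕ, 2 ≤ i → P q i i = if q = 0 then 1 else 0)
    (hPrec : ∀ q i t : ℕ, 1 ≤ i → i ≤ t →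
      P q i (t + 1) = ∑ j ∈ Finset.Icc 0 (min m q),
        (m.choose j : ℝ) * (((q : ℝ) - (j : ℝ) + A) / ((m + A) * t)) ^ j *
          (1 - ((q : ℝ) - (j : ℝ) + A) / ((m + A) * t)) ^ (m - j) * P (q - j) i t)
    (Pbar : ℕ → ℕ → ℝ)
    (hPbar : ∀ q t : ℕ, 2 ≤ t →
      Pbar q t = (1 / ((t : ℝ) - 1)) * ∑ i ∈ Finset.Icc 2 t, P q i t) :
    ∀ t : ℕ, 2 ≤ t →
      Pbar 0 (t + 1) =
        (((t : ℝ) - 1) / (t : ℝ)) * Pbar 0 t * (1 - A / ((m + A) * t)) ^ m + 1 / (t : ℝ) := by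
  intro t ht
  have ht2 : (2:ℝ) ≤ (t:ℝ) := by exact_mod_cast ht
  have ht0 : (t:ℝ) ≠ 0 := by linarith
  have ht1 : (t:ℝ) - 1 ≠ 0 := by linarith
  set c : ℝ := (1 - A / ((m + A) * t)) ^ m with hc
  have key : ∀ i ∈ Finset.Icc 2 t, P 0 i (t + 1) = c * P 0 i t := by
    intro i hi
    simp only [Finset.mem_Icc] at hi
    rw [hPrec 0 i t (le_trans (by norm_num) hi.1) hi.2]
    simp [hc]
  have hsum : ∑ i ∈ Finset.Icc 2 (t + 1), P 0 i (t + 1)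
      = c * ∑ i ∈ Finset.Icc 2 t, P 0 i t + 1 := by
    rw [Finset.sum_Icc_succ_top (by omega : 2 ≤ t + 1),
      Finset.sum_congr rfl key, hPii 0 (t + 1) (by omega)]
    simp [Finset.mul_sum]
  rw [hPbar 0 (t + 1) (by omega), hPbar 0 t ht, hsum]
  push_cast
  field_simp
  have h1 : (t:ℝ) * (t:ℝ)⁻¹ = 1 := mul_inv_cancel₀ ht0
  linear_combination (c * ∑ x ∈ Icc 2 t, P 0 x t + 1) * h1
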